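/- Fix d ∈ ℕ+, α > 0 and constants c > 0, C̄ > 0. Assume the squared-exponential-type information-gain bound: for every m ∈ ℕ+, every λ > 0 and every m-tuple Z of points of 𝒳, I_{λ²I_m}(Z) ≤ C̄·(ln(1 + m/λ²))^{d+1}. Let (λ̄_T)_{T∈ℕ+} be strictly positive reals with λ̄_T² ≥ c·exp(−T^{1/(d+1)}·(ln(1+T))^{−α}) for all T ∈ ℕ+, and for each T let x_{T,1},…,x_{T,T} ∈ 𝒳̃ (a nonempty subset of 𝒳) be chosen by maximum variance reduction with noise level λ̄_T²: for every t ∈ [T] and x ∈ 𝒳̃, σ_{λ̄_T²I_{t−1}}(x; X_{T,t−1}) ≤ σ_{λ̄_T²I_{t−1}}(x_{T,t}; X_{T,t−1}). Then there exists T̄ ∈ ℕ+, depending only on c, C̄, α, d, such that for every T ≥ T̄ and every x ∈ 𝒳̃: σ_{λ̄_T²I_T}(x; X_{T,T}) ≤ (4/T)·√( λ̄_T²·T·C̄·(ln(1 + T/λ̄_T²))^{d+1} ). -/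

import Mathlib

open Matrix Real Finset

noncomputable section

universe u

/-- Gram (kernel) matrix of a finite tuple of points. -/
def gramMat {𝒳 : Type u} (k : 𝒳 → 𝒳 → ℝ) {m : ℕ} (X : Fin m → 𝒳) :
    Matrix (Fin m) (Fin m) ℝ :=
  Matrix.of fun i j => k (X i) (X j)

/-- Kernel vector `k(x, X)`. -/
def kVec {𝒳 : Type u} (k : 𝒳 → 𝒳 → ℝ) {m : ℕ} (X : Fin m → 𝒳) (x : 𝒳) : Fin m → ℝ :=
  fun i => k x (X i)

/-- Posterior variance `σ²_Σ(x; X)`. -/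
def postVar {𝒳 : Type u} (k : 𝒳 → 𝒳 → ℝ) {m : ℕ} (S : Matrix (Fin m) (Fin m) ℝ)
    (X : Fin m → 𝒳) (x : 𝒳) : ℝ :=
  k x x - kVec k X x ⬝ᵥ ((gramMat k X + S)⁻¹ *ᵥ kVec k X x)

/-- Posterior standard deviation `σ_Σ(x; X)`. -/
def postStd {𝒳 : Type u} (k : 𝒳 → 𝒳 → ℝ) {m : ℕ} (S : Matrix (Fin m) (Fin m) ℝ)
    (X : Fin m → 𝒳) (x : 𝒳) : ℝ :=
  Real.sqrt (postVar k S X x)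

/-- Posterior mean `μ_Σ(x; X, y)`. -/
def postMean {𝒳 : Type u} (k : 𝒳 → 𝒳 → ℝ) {m : ℕ} (S : Matrix (Fin m) (Fin m) ℝ)
    (X : Fin m → 𝒳) (y : Fin m → ℝ) (x : 𝒳) : ℝ :=
  kVec k X x ⬝ᵥ ((gramMat k X + S)⁻¹ *ᵥ y)

/-- Information gain `I_Σ(Z)`. -/
def infoGain {𝒳 : Type u} (k : 𝒳 → 𝒳 → ℝ) {m : ℕ} (S : Matrix (Fin m) (Fin m) ℝ)
    (Z : Fin m → 𝒳) : ℝ :=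
  (1 / 2) * Real.log ((S + gramMat k Z).det / S.det)

/-- `k` is a symmetric positive semidefinite kernel. -/
def IsKernel {𝒳 : Type u} (k : 𝒳 → 𝒳 → ℝ) : Prop :=
  (∀ x y, k x y = k y x) ∧ ∀ (m : ℕ) (Z : Fin m → 𝒳), (gramMat k Z).PosSemidef

/-- Prefix of length `t` of a sequence of points. -/
def preT {𝒳 : Type u} (x : ℕ → 𝒳) (t : ℕ) : Fin t → 𝒳 := fun i => x i.val

lemma smul_one_posDef {n : ℕ} {ν : ℝ} (h : 0 < ν) :
    (ν • (1 : Matrix (Fin n) (Fin n) ℝ)).PosDef := by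
  rw [Matrix.posDef_iff_dotProduct_mulVec]
  constructor
  · simp [Matrix.IsHermitian]
  · intro x hx
    have : (ν • (1 : Matrix (Fin n) (Fin n) ℝ)) *ᵥ x = ν • x := by
      rw [Matrix.smul_mulVec, Matrix.one_mulVec]
    rw [this]
    simp only [dotProduct_smul, smul_eq_mul, star_trivial]
    have hxx : 0 < x ⬝ᵥ x := by
      have := Matrix.dotProduct_star_self_pos_iff (v := x)
      simpa using this.mpr hx
    positivity

lemma regGram_posDef {𝒳 : Type u} {k : 𝒳 → 𝒳 → ℝ} (hk : IsKernel k) {m : ℕ}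
    (X : Fin m → 𝒳) {ν : ℝ} (hν : 0 < ν) :
    (gramMat k X + ν • (1 : Matrix (Fin m) (Fin m) ℝ)).PosDef :=
  Matrix.PosDef.posSemidef_add (hk.2 m X) (smul_one_posDef hν)

lemma quad_ineq {m : ℕ} {A : Matrix (Fin m) (Fin m) ℝ} (hA : A.PosDef)
    (u w : Fin m → ℝ) :
    2 * (u ⬝ᵥ w) - w ⬝ᵥ (A *ᵥ w) ≤ u ⬝ᵥ (A⁻¹ *ᵥ u) := by
  have hAsymm : Aᵀ = A := hA.isHermitian
  have hinv : A * A⁻¹ = 1 := Matrix.mul_nonsing_inv A (isUnit_iff_ne_zero.mpr hA.det_pos.ne')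
  set v := A⁻¹ *ᵥ u with hv
  have hAv : A *ᵥ v = u := by
    rw [hv, Matrix.mulVec_mulVec, hinv, Matrix.one_mulVec]
  have h0 : 0 ≤ (w - v) ⬝ᵥ (A *ᵥ (w - v)) := by
    have := hA.posSemidef.dotProduct_mulVec_nonneg (w - v)
    simpa using this
  have hsym : ∀ a b : Fin m → ℝ, a ⬝ᵥ (A *ᵥ b) = (A *ᵥ a) ⬝ᵥ b := by
    intro a b
    rw [Matrix.dotProduct_mulVec, ← Matrix.mulVec_transpose, hAsymm]
  have hexp : (w - v) ⬝ᵥ (A *ᵥ (w - v))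
      = w ⬝ᵥ (A *ᵥ w) - 2 * (u ⬝ᵥ w) + u ⬝ᵥ v := by
    rw [Matrix.mulVec_sub, dotProduct_sub, sub_dotProduct,
      sub_dotProduct, hAv]
    have h1 : v ⬝ᵥ (A *ᵥ w) = u ⬝ᵥ w := by rw [hsym, hAv]
    have h2 : w ⬝ᵥ u = u ⬝ᵥ w := dotProduct_comm _ _
    have h3 : v ⬝ᵥ u = u ⬝ᵥ v := dotProduct_comm _ _
    rw [h1, h2, h3]; ring
  rw [hexp] at h0
  linarith

lemma quad_eq {m : ℕ} {A : Matrix (Fin m) (Fin m) ℝ} (hA : A.PosDef)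
    (u : Fin m → ℝ) :
    u ⬝ᵥ (A⁻¹ *ᵥ u) = 2 * (u ⬝ᵥ (A⁻¹ *ᵥ u)) - (A⁻¹ *ᵥ u) ⬝ᵥ (A *ᵥ (A⁻¹ *ᵥ u)) := by
  have hinv : A * A⁻¹ = 1 := Matrix.mul_nonsing_inv A (isUnit_iff_ne_zero.mpr hA.det_pos.ne')
  have hAv : A *ᵥ (A⁻¹ *ᵥ u) = u := by
    rw [Matrix.mulVec_mulVec, hinv, Matrix.one_mulVec]
  rw [hAv]
  have h3 : (A⁻¹ *ᵥ u) ⬝ᵥ u = u ⬝ᵥ (A⁻¹ *ᵥ u) := dotProduct_comm _ _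
  rw [h3]; ring

lemma bordered_key {𝒳 : Type u} {k : 𝒳 → 𝒳 → ℝ} (hk : IsKernel k) {m : ℕ}
    (X : Fin m → 𝒳) (x : 𝒳) (v : Fin m → ℝ) :
    0 ≤ k x x - 2 * (kVec k X x ⬝ᵥ v) + v ⬝ᵥ (gramMat k X *ᵥ v) := by
  have h := (hk.2 (m+1) (Fin.cons x X)).dotProduct_mulVec_nonneg (Fin.cons (-1) v)
  have hsymm : ∀ p, k (X p) x = k x (X p) := fun p => hk.1 _ _
  have hexp : star (Fin.cons (-1 : ℝ) v) ⬝ᵥ (gramMat k (Fin.cons x X) *ᵥ Fin.cons (-1) v)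
      = k x x - 2 * (kVec k X x ⬝ᵥ v) + v ⬝ᵥ (gramMat k X *ᵥ v) := by
    simp only [star_trivial, dotProduct, Matrix.mulVec, gramMat, kVec,
      Matrix.of_apply, Fin.sum_univ_succ, Fin.cons_zero, Fin.cons_succ, hsymm,
      mul_add, mul_neg, mul_one, neg_mul, one_mul, Finset.sum_add_distrib,
      Finset.sum_neg_distrib, Finset.mul_sum]
    have hc : ∑ i : Fin m, v i * k x (X i) = ∑ i : Fin m, k x (X i) * v i :=
      Finset.sum_congr rfl (fun i _ => mul_comm _ _)
    have hc2 : ∑ i : Fin m, 2 * (k x (X i) * v i) = 2 * ∑ i : Fin m, k x (X i) * v i :=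
      (Finset.mul_sum _ _ _).symm
    rw [hc, hc2]; ring
  rw [hexp] at h
  exact h

lemma postVar_nonneg {𝒳 : Type u} {k : 𝒳 → 𝒳 → ℝ} (hk : IsKernel k) {m : ℕ}
    (X : Fin m → 𝒳) {ν : ℝ} (hν : 0 < ν) (x : 𝒳) :
    0 ≤ postVar k (ν • (1 : Matrix (Fin m) (Fin m) ℝ)) X x := by
  set A := gramMat k X + ν • (1 : Matrix (Fin m) (Fin m) ℝ) with hA
  have hApd : A.PosDef := regGram_posDef hk X hν
  set b := kVec k X x with hb
  set v := A⁻¹ *ᵥ b with hv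
  have h1 : b ⬝ᵥ (A⁻¹ *ᵥ b) = 2 * (b ⬝ᵥ v) - v ⬝ᵥ (A *ᵥ v) := quad_eq hApd b
  have h2 : v ⬝ᵥ (A *ᵥ v) = v ⬝ᵥ (gramMat k X *ᵥ v) + ν * (v ⬝ᵥ v) := by
    rw [hA, Matrix.add_mulVec, dotProduct_add, Matrix.smul_mulVec,
      Matrix.one_mulVec, dotProduct_smul, smul_eq_mul]
  have h3 : 0 ≤ v ⬝ᵥ v := by
    simp only [dotProduct]
    exact Finset.sum_nonneg fun i _ => mul_self_nonneg _
  have h4 := bordered_key hk X x v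
  have hcomm : b ⬝ᵥ v = kVec k X x ⬝ᵥ v := rfl
  have : postVar k (ν • (1 : Matrix (Fin m) (Fin m) ℝ)) X x
      = k x x - b ⬝ᵥ (A⁻¹ *ᵥ b) := rfl
  rw [this, h1, h2]
  nlinarith [hν]

lemma sum_extend {n m : ℕ} (h : m ≤ n) (f : Fin n → ℝ)
    (hf : ∀ i : Fin n, m ≤ i.1 → f i = 0) :
    ∑ i : Fin n, f i = ∑ i : Fin m, f (Fin.castLE h i) := by
  classical
  have hmap : ∑ i ∈ Finset.univ.map ⟨Fin.castLE h, Fin.castLE_injective h⟩, f i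
      = ∑ i : Fin m, f (Fin.castLE h i) := Finset.sum_map _ _ _
  rw [← hmap]
  symm
  apply Finset.sum_subset (Finset.subset_univ _)
  intro i _ hi
  apply hf
  by_contra hlt
  push_neg at hlt
  exact hi (Finset.mem_map.mpr ⟨⟨i.1, hlt⟩, Finset.mem_univ _, by
    simp [Fin.castLE]⟩)

lemma postVar_prefix_mono {𝒳 : Type u} {k : 𝒳 → 𝒳 → ℝ} (hk : IsKernel k)
    (x : ℕ → 𝒳) {ν : ℝ} (hν : 0 < ν) {m n : ℕ} (hmn : m ≤ n) (y : 𝒳) :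
    postVar k (ν • (1 : Matrix (Fin n) (Fin n) ℝ)) (preT x n) y
      ≤ postVar k (ν • (1 : Matrix (Fin m) (Fin m) ℝ)) (preT x m) y := by
  set An := gramMat k (preT x n) + ν • (1 : Matrix (Fin n) (Fin n) ℝ) with hAn
  set Am := gramMat k (preT x m) + ν • (1 : Matrix (Fin m) (Fin m) ℝ) with hAm
  have hAnpd : An.PosDef := regGram_posDef hk _ hν
  have hAmpd : Am.PosDef := regGram_posDef hk _ hν
  set u := kVec k (preT x n) y with hu
  set u₁ := kVec k (preT x m) y with hu1
  set w₁ := Am⁻¹ *ᵥ u₁ with hw1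
  set w : Fin n → ℝ := fun i => if hi : i.1 < m then w₁ ⟨i.1, hi⟩ else 0 with hw
  have hwz : ∀ i : Fin n, m ≤ i.1 → w i = 0 := by
    intro i hi; simp only [hw]; rw [dif_neg (by omega)]
  have hwc : ∀ i : Fin m, w (Fin.castLE hmn i) = w₁ i := by
    intro i; simp only [hw]; rw [dif_pos (by exact i.2)]
    exact congrArg w₁ (Fin.ext rfl)
  -- (a)
  have ha : u ⬝ᵥ w = u₁ ⬝ᵥ w₁ := by
    simp only [dotProduct]
    rw [sum_extend hmn (fun i => u i * w i) (fun i hi => by show u i * w i = 0; rw [hwz i hi, mul_zero])]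
    apply Finset.sum_congr rfl
    intro i _
    rw [hwc]
    rfl
  -- (b)
  have hb : w ⬝ᵥ (An *ᵥ w) = w₁ ⬝ᵥ (Am *ᵥ w₁) := by
    simp only [dotProduct, Matrix.mulVec]
    rw [sum_extend hmn (fun i => w i * ∑ j, An i j * w j)
      (fun i hi => by show w i * _ = 0; rw [hwz i hi, zero_mul])]
    apply Finset.sum_congr rfl
    intro i _
    rw [hwc]
    congr 1
    rw [sum_extend hmn (fun j => An (Fin.castLE hmn i) j * w j)
      (fun j hj => by show _ * w j = 0; rw [hwz j hj, mul_zero])]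
    apply Finset.sum_congr rfl
    intro j _
    rw [hwc]
    congr 1
    simp only [hAn, hAm, Matrix.add_apply, gramMat, Matrix.of_apply, preT,
      Matrix.smul_apply, Matrix.one_apply, smul_eq_mul]
    have : (Fin.castLE hmn i = Fin.castLE hmn j) ↔ (i = j) :=
      (Fin.castLE_injective hmn).eq_iff
    simp only [Fin.coe_castLE]
    by_cases hij : i = j
    · rw [if_pos (this.mpr hij), if_pos hij]
    · rw [if_neg (fun hh => hij (this.mp hh)), if_neg hij]
  have hq : u₁ ⬝ᵥ (Am⁻¹ *ᵥ u₁) = 2 * (u ⬝ᵥ w) - w ⬝ᵥ (An *ᵥ w) := by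
    rw [ha, hb]; exact quad_eq hAmpd u₁
  have hineq : u₁ ⬝ᵥ (Am⁻¹ *ᵥ u₁) ≤ u ⬝ᵥ (An⁻¹ *ᵥ u) := by
    rw [hq]; exact quad_ineq hAnpd u w
  have e1 : postVar k (ν • (1 : Matrix (Fin n) (Fin n) ℝ)) (preT x n) y
      = k y y - u ⬝ᵥ (An⁻¹ *ᵥ u) := rfl
  have e2 : postVar k (ν • (1 : Matrix (Fin m) (Fin m) ℝ)) (preT x m) y
      = k y y - u₁ ⬝ᵥ (Am⁻¹ *ᵥ u₁) := rfl
  rw [e1, e2]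
  linarith

lemma det_step {𝒳 : Type u} {k : 𝒳 → 𝒳 → ℝ} (hk : IsKernel k) (x : ℕ → 𝒳)
    {ν : ℝ} (hν : 0 < ν) (n : ℕ) :
    (gramMat k (preT x (n+1)) + ν • (1 : Matrix (Fin (n+1)) (Fin (n+1)) ℝ)).det
      = (gramMat k (preT x n) + ν • (1 : Matrix (Fin n) (Fin n) ℝ)).det
        * (ν + postVar k (ν • (1 : Matrix (Fin n) (Fin n) ℝ)) (preT x n) (x n)) := by
  set B := gramMat k (preT x n) + ν • (1 : Matrix (Fin n) (Fin n) ℝ) with hB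
  set M := gramMat k (preT x (n+1)) + ν • (1 : Matrix (Fin (n+1)) (Fin (n+1)) ℝ) with hM
  set b := kVec k (preT x n) (x n) with hb
  set Cm : Matrix (Fin n) (Fin 1) ℝ := Matrix.of (fun i _ => b i) with hCm
  set R : Matrix (Fin 1) (Fin n) ℝ := Matrix.of (fun _ j => b j) with hR
  set D : Matrix (Fin 1) (Fin 1) ℝ := Matrix.of (fun _ _ => k (x n) (x n) + ν) with hD
  have hBpd : B.PosDef := regGram_posDef hk _ hν
  haveI : Invertible B := B.invertibleOfIsUnitDet (isUnit_iff_ne_zero.mpr hBpd.det_pos.ne')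
  have hsub : M.submatrix (finSumFinEquiv (m := n) (n := 1))
      (finSumFinEquiv (m := n) (n := 1)) = Matrix.fromBlocks B Cm R D := by
    ext p q
    rcases p with i | i <;> rcases q with j | j <;>
      simp [hM, hB, hCm, hR, hD, hb, Matrix.submatrix_apply, Matrix.add_apply, gramMat,
        preT, kVec, Matrix.smul_apply, Matrix.one_apply, finSumFinEquiv_apply_left,
        finSumFinEquiv_apply_right, Fin.ext_iff, Fin.coe_castAdd, Fin.coe_natAdd]
    · rw [if_neg (by omega : ¬ ((i : ℕ) = n)), add_zero]
      exact hk.1 _ _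
    · exact fun h => absurd h (by omega)
  have hRBC : (R * B⁻¹ * Cm) 0 0 = b ⬝ᵥ (B⁻¹ *ᵥ b) := by
    simp only [Matrix.mul_apply, dotProduct, Matrix.mulVec, hR, hCm,
      Matrix.of_apply, Finset.sum_mul, Finset.mul_sum]
    rw [Finset.sum_comm]
    exact Finset.sum_congr rfl fun i _ => Finset.sum_congr rfl fun j _ => by ring
  have hdet : M.det = B.det * (D - R * B⁻¹ * Cm).det := by
    rw [← Matrix.det_submatrix_equiv_self (finSumFinEquiv (m := n) (n := 1)) M, hsub,
      Matrix.det_fromBlocks₁₁, Matrix.invOf_eq_nonsing_inv]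
  rw [hdet]
  congr 1
  rw [Matrix.det_fin_one]
  have : (D - R * B⁻¹ * Cm) 0 0 = k (x n) (x n) + ν - b ⬝ᵥ (B⁻¹ *ᵥ b) := by
    rw [Matrix.sub_apply, hRBC]; rfl
  rw [this]
  have : postVar k (ν • (1 : Matrix (Fin n) (Fin n) ℝ)) (preT x n) (x n)
      = k (x n) (x n) - b ⬝ᵥ (B⁻¹ *ᵥ b) := rfl
  rw [this]
  ring

lemma det_prod {𝒳 : Type u} {k : 𝒳 → 𝒳 → ℝ} (hk : IsKernel k) (x : ℕ → 𝒳)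
    {ν : ℝ} (hν : 0 < ν) (n : ℕ) :
    (gramMat k (preT x n) + ν • (1 : Matrix (Fin n) (Fin n) ℝ)).det
      = ∏ t ∈ Finset.range n,
          (ν + postVar k (ν • (1 : Matrix (Fin t) (Fin t) ℝ)) (preT x t) (x t)) := by
  induction n with
  | zero => simp [Matrix.det_fin_zero]
  | succ n ih => rw [det_step hk x hν n, ih, Finset.prod_range_succ]

lemma infoGain_eq {𝒳 : Type u} {k : 𝒳 → 𝒳 → ℝ} (hk : IsKernel k) (x : ℕ → 𝒳)
    {ν : ℝ} (hν : 0 < ν) (n : ℕ) :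
    2 * infoGain k (ν • (1 : Matrix (Fin n) (Fin n) ℝ)) (preT x n)
      = ∑ t ∈ Finset.range n,
          Real.log (1 + postVar k (ν • (1 : Matrix (Fin t) (Fin t) ℝ)) (preT x t) (x t) / ν) := by
  have hv : ∀ t, 0 ≤ postVar k (ν • (1 : Matrix (Fin t) (Fin t) ℝ)) (preT x t) (x t) :=
    fun t => postVar_nonneg hk _ hν _
  have hdetS : (ν • (1 : Matrix (Fin n) (Fin n) ℝ)).det = ν ^ n := by
    rw [Matrix.det_smul, Matrix.det_one, mul_one, Fintype.card_fin]
  have hcomm : ν • (1 : Matrix (Fin n) (Fin n) ℝ) + gramMat k (preT x n)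
      = gramMat k (preT x n) + ν • 1 := add_comm _ _
  rw [infoGain, hcomm, hdetS, det_prod hk x hν n]
  have hνn : (ν : ℝ) ^ n = ∏ _t ∈ Finset.range n, ν := by
    rw [Finset.prod_const, Finset.card_range]
  rw [hνn, ← Finset.prod_div_distrib]
  rw [Real.log_prod (fun t _ => by have h := hv t; positivity)]
  rw [← mul_assoc]
  norm_num
  exact Finset.sum_congr rfl fun t _ => by
    congr 1
    field_simp

lemma exists_Tbar (d : ℕ) (α : ℝ) (hα : 0 < α) (c Cb : ℝ) (hc : 0 < c) (hCb : 0 < Cb) :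
    ∃ Tb : ℕ, 0 < Tb ∧ ∀ T : ℕ, Tb ≤ T → ∀ e : ℝ, 0 < e →
      c * Real.exp (-(T : ℝ) ^ ((1 : ℝ) / ((d : ℝ) + 1))
          * (Real.log (1 + (T : ℝ))) ^ (-α)) ≤ e →
      2 * (Cb * (Real.log (1 + (T : ℝ) / e)) ^ (d + 1)) ≤ (T : ℝ) := by
  set r : ℝ := (1 : ℝ) / ((d : ℝ) + 1) with hr
  have hrpos : 0 < r := by
    rw [hr]; positivity
  set q : ℝ := (2 * Cb) ^ r with hq
  have hqpos : 0 < q := Real.rpow_pos_of_pos (by linarith) r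
  set C₀ : ℝ := max 0 (-Real.log c) with hC₀
  have hC₀0 : 0 ≤ C₀ := le_max_left _ _
  set K : ℝ := Real.log 2 + C₀ with hK
  -- eventual bound (i)
  have h1 : Filter.Tendsto (fun x : ℝ => Real.log x / x ^ r + K / x ^ r)
      Filter.atTop (nhds 0) := by
    have ha : Filter.Tendsto (fun x : ℝ => Real.log x / x ^ r) Filter.atTop (nhds 0) :=
      (isLittleO_log_rpow_atTop hrpos).tendsto_div_nhds_zero
    have hb : Filter.Tendsto (fun x : ℝ => K / x ^ r) Filter.atTop (nhds 0) := by
      have := (tendsto_rpow_atTop hrpos).inv_tendsto_atTop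
      have := this.const_mul K
      simpa [div_eq_mul_inv] using this
    simpa using ha.add hb
  have hev1 : ∀ᶠ x : ℝ in Filter.atTop,
      Real.log x / x ^ r + K / x ^ r ≤ 1 / (2 * q) :=
    h1.eventually_le_const (by positivity)
  -- eventual bound (ii)
  have h2 : Filter.Tendsto (fun x : ℝ => q * (Real.log (1 + x)) ^ (-α))
      Filter.atTop (nhds 0) := by
    have hlog : Filter.Tendsto (fun x : ℝ => Real.log (1 + x)) Filter.atTop Filter.atTop :=
      Real.tendsto_log_atTop.comp (Filter.tendsto_atTop_add_const_left _ 1 Filter.tendsto_id)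
    have := (tendsto_rpow_neg_atTop hα).comp hlog
    have := this.const_mul q
    simpa using this
  have hev2 : ∀ᶠ x : ℝ in Filter.atTop, q * (Real.log (1 + x)) ^ (-α) ≤ 1 / 2 :=
    h2.eventually_le_const (by norm_num)
  obtain ⟨N, hN⟩ := Filter.eventually_atTop.mp ((hev1.and hev2).and
    (Filter.eventually_ge_atTop (1 : ℝ)))
  refine ⟨⌈N⌉₊ + 1, Nat.succ_pos _, ?_⟩
  intro T hT e he hce
  set x : ℝ := (T : ℝ) with hx
  have hxN : N ≤ x := by
    calc N ≤ ⌈N⌉₊ := Nat.le_ceil N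
    _ ≤ (T : ℝ) := by exact_mod_cast le_trans (Nat.le_succ _) hT
  obtain ⟨⟨hB1, hB2⟩, hx1⟩ := hN x hxN
  have hx0 : (0 : ℝ) < x := lt_of_lt_of_le one_pos hx1
  set β : ℝ := x ^ r * (Real.log (1 + x)) ^ (-α) with hβ
  have hβ0 : 0 ≤ β := by
    apply mul_nonneg (Real.rpow_nonneg hx0.le r)
    exact Real.rpow_nonneg (Real.log_nonneg (by linarith)) _
  set L : ℝ := Real.log (1 + x) + C₀ + β with hL
  have hlog1x : 0 ≤ Real.log (1 + x) := Real.log_nonneg (by linarith)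
  have hL0 : 0 ≤ L := by positivity
  -- step A : log (1 + x / e) ≤ L
  have hinvc : 1 / c ≤ Real.exp C₀ := by
    rw [← Real.exp_log (by positivity : (0:ℝ) < 1 / c)]
    apply Real.exp_le_exp.mpr
    rw [Real.log_div one_ne_zero hc.ne', Real.log_one, zero_sub]
    exact le_max_right _ _
  have hepos := he
  have hediv : x / e ≤ x * Real.exp β * Real.exp C₀ := by
    have h1' : c * Real.exp (-β) ≤ e := by
      simpa [hβ, neg_mul] using hce
    have h2' : x / e ≤ x / (c * Real.exp (-β)) :=
      div_le_div_of_nonneg_left hx0.le (by positivity) h1'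
    calc x / e ≤ x / (c * Real.exp (-β)) := h2'
    _ = x * Real.exp β * (1 / c) := by
        rw [Real.exp_neg]; field_simp
    _ ≤ x * Real.exp β * Real.exp C₀ := by
        apply mul_le_mul_of_nonneg_left hinvc (by positivity)

  have hstepA : Real.log (1 + x / e) ≤ L := by
    have hmain : 1 + x / e ≤ (1 + x) * Real.exp (β + C₀) := by
      have hexp1 : (1:ℝ) ≤ Real.exp (β + C₀) := by
        rw [← Real.exp_zero]; exact Real.exp_le_exp.mpr (by linarith)
      have : x * Real.exp β * Real.exp C₀ = x * Real.exp (β + C₀) := by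
        rw [Real.exp_add]; ring
      nlinarith [hediv, hx0]
    calc Real.log (1 + x / e) ≤ Real.log ((1 + x) * Real.exp (β + C₀)) := by
          apply Real.log_le_log (by positivity) hmain
    _ = Real.log (1 + x) + (β + C₀) := by
          rw [Real.log_mul (by positivity) (Real.exp_ne_zero _), Real.log_exp]
    _ = L := by rw [hL]; ring
  -- step B : q * L ≤ x ^ r
  have hxr0 : 0 < x ^ r := Real.rpow_pos_of_pos hx0 r
  have hlogle : Real.log (1 + x) ≤ Real.log x + Real.log 2 := by
    calc Real.log (1 + x) ≤ Real.log (2 * x) := by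
          apply Real.log_le_log (by linarith) (by linarith)
    _ = Real.log 2 + Real.log x := Real.log_mul two_ne_zero hx0.ne'
    _ = Real.log x + Real.log 2 := by ring
  have hstepB1 : q * (Real.log (1 + x) + C₀) ≤ x ^ r / 2 := by
    have h' : Real.log (1 + x) + C₀ ≤ Real.log x + K := by rw [hK]; linarith
    have h'' : Real.log x + K ≤ x ^ r * (1 / (2 * q)) := by
      have := hB1
      have hx' : (Real.log x + K) / x ^ r ≤ 1 / (2 * q) := by
        rw [add_div]; exact hB1
      calc Real.log x + K = x ^ r * ((Real.log x + K) / x ^ r) := by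
            field_simp
      _ ≤ x ^ r * (1 / (2 * q)) := by
            apply mul_le_mul_of_nonneg_left hx' hxr0.le
    calc q * (Real.log (1 + x) + C₀) ≤ q * (Real.log x + K) := by
          apply mul_le_mul_of_nonneg_left h' hqpos.le
    _ ≤ q * (x ^ r * (1 / (2 * q))) := by
          apply mul_le_mul_of_nonneg_left h'' hqpos.le
    _ = x ^ r / 2 := by field_simp
  have hstepB2 : q * β ≤ x ^ r / 2 := by
    rw [hβ]
    calc q * (x ^ r * (Real.log (1 + x)) ^ (-α))
        = x ^ r * (q * (Real.log (1 + x)) ^ (-α)) := by ring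
    _ ≤ x ^ r * (1 / 2) := mul_le_mul_of_nonneg_left hB2 hxr0.le
    _ = x ^ r / 2 := by ring
  have hstepB : q * L ≤ x ^ r := by
    rw [hL]
    calc q * (Real.log (1 + x) + C₀ + β)
        = q * (Real.log (1 + x) + C₀) + q * β := by ring
    _ ≤ x ^ r / 2 + x ^ r / 2 := add_le_add hstepB1 hstepB2
    _ = x ^ r := by ring
  -- conclude
  have hqL0 : 0 ≤ q * L := mul_nonneg hqpos.le hL0
  have hpow : (q * L) ^ (d + 1) ≤ (x ^ r) ^ (d + 1) :=
    pow_le_pow_left₀ hqL0 hstepB (d + 1)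
  have hxr : (x ^ r) ^ (d + 1) = x := by
    rw [← Real.rpow_natCast (x ^ r) (d + 1), ← Real.rpow_mul hx0.le, hr]
    push_cast
    rw [div_mul_cancel₀, Real.rpow_one]
    positivity
  have hqd : q ^ (d + 1) = 2 * Cb := by
    rw [hq, ← Real.rpow_natCast ((2 * Cb) ^ r) (d + 1), ← Real.rpow_mul (by linarith), hr]
    push_cast
    rw [div_mul_cancel₀, Real.rpow_one]
    positivity
  have hlogf : 0 ≤ Real.log (1 + x / e) := Real.log_nonneg (by
    have : 0 ≤ x / e := by positivity
    linarith)
  calc 2 * (Cb * (Real.log (1 + x / e)) ^ (d + 1))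
      = (2 * Cb) * (Real.log (1 + x / e)) ^ (d + 1) := by ring
  _ ≤ (2 * Cb) * L ^ (d + 1) := by
      apply mul_le_mul_of_nonneg_left (pow_le_pow_left₀ hlogf hstepA (d + 1)) (by linarith)
  _ = (q * L) ^ (d + 1) := by rw [mul_pow, hqd]
  _ ≤ (x ^ r) ^ (d + 1) := hpow
  _ = x := hxr

lemma exp_le_one_add_two_mul {y : ℝ} (h0 : 0 ≤ y) (h1 : y ≤ 1) :
    Real.exp y ≤ 1 + 2 * y := by
  have hb := Real.exp_bound (x := y) (by rwa [abs_of_nonneg h0]) (n := 1) one_pos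
  simp only [Finset.sum_range_one, pow_zero, Nat.factorial_zero, Nat.cast_one, div_one,
    pow_one, Nat.factorial_one, mul_one, abs_of_nonneg h0] at hb
  have := abs_le.mp hb
  have h2 := this.2
  norm_num at h2
  linarith

/-- MVR posterior variance bound under the squared-exponential-type
information-gain bound, with `T̄` depending only on `c`, `C̄`, `α`, `d`. -/
theorem mvr_posterior_variance_bound_SE
    (d : ℕ) (hd : 0 < d) (α : ℝ) (hα : 0 < α) (c : ℝ) (hc : 0 < c)
    (Cb : ℝ) (hCb : 0 < Cb) :
    ∃ Tb : ℕ, 0 < Tb ∧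
      ∀ (𝒳 : Type u) (k : 𝒳 → 𝒳 → ℝ), IsKernel k →
      (∀ m : ℕ, 0 < m → ∀ l : ℝ, 0 < l → ∀ Z : Fin m → 𝒳,
        infoGain k ((l ^ 2) • (1 : Matrix (Fin m) (Fin m) ℝ)) Z
          ≤ Cb * (Real.log (1 + (m : ℝ) / l ^ 2)) ^ (d + 1)) →
      ∀ lamBar : ℕ → ℝ, (∀ T, 0 < lamBar T) →
      (∀ T : ℕ, 0 < T →
        c * Real.exp (-(T : ℝ) ^ ((1 : ℝ) / ((d : ℝ) + 1))
            * (Real.log (1 + (T : ℝ))) ^ (-α)) ≤ lamBar T ^ 2) →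
      ∀ Xtil : Set 𝒳, Xtil.Nonempty →
      ∀ xs : ℕ → ℕ → 𝒳,
      (∀ T, 0 < T → ∀ t < T, xs T t ∈ Xtil) →
      (∀ T, 0 < T → ∀ t < T, ∀ x ∈ Xtil,
        postStd k ((lamBar T ^ 2) • (1 : Matrix (Fin t) (Fin t) ℝ)) (preT (xs T) t) x
          ≤ postStd k ((lamBar T ^ 2) • (1 : Matrix (Fin t) (Fin t) ℝ)) (preT (xs T) t)
              (xs T t)) →
      ∀ T, Tb ≤ T → ∀ x ∈ Xtil,
        postStd k ((lamBar T ^ 2) • (1 : Matrix (Fin T) (Fin T) ℝ)) (preT (xs T) T) x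
          ≤ (4 / (T : ℝ)) * Real.sqrt (lamBar T ^ 2 * T
              * (Cb * (Real.log (1 + (T : ℝ) / lamBar T ^ 2)) ^ (d + 1))) := by
  obtain ⟨Tb, hTb0, hTb⟩ := exists_Tbar d α hα c Cb hc hCb
  refine ⟨Tb, hTb0, ?_⟩
  intro 𝒳 k hK hIG lamBar hlam hlam2 Xtil hXtil xs hxs hMVR T hT x hx
  have hT0 : 0 < T := lt_of_lt_of_le hTb0 hT
  have hT0' : (0 : ℝ) < T := by exact_mod_cast hT0
  set e := lamBar T ^ 2 with he
  have he0 : 0 < e := pow_pos (hlam T) 2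
  set γ := Cb * (Real.log (1 + (T : ℝ) / e)) ^ (d + 1) with hγ
  have hlogTe : 0 ≤ Real.log (1 + (T : ℝ) / e) := Real.log_nonneg (by
    have : 0 ≤ (T : ℝ) / e := by positivity
    linarith)
  have hγ0 : 0 ≤ γ := by rw [hγ]; positivity
  have hIGle : infoGain k (e • (1 : Matrix (Fin T) (Fin T) ℝ)) (preT (xs T) T) ≤ γ :=
    hIG T hT0 (lamBar T) (hlam T) _
  have hsum := infoGain_eq hK (xs T) he0 T
  set s := postVar k (e • (1 : Matrix (Fin T) (Fin T) ℝ)) (preT (xs T) T) x with hs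
  have hs0 : 0 ≤ s := postVar_nonneg hK _ he0 x
  have hterm : ∀ t ∈ Finset.range T, Real.log (1 + s / e)
      ≤ Real.log (1 + postVar k (e • (1 : Matrix (Fin t) (Fin t) ℝ)) (preT (xs T) t)
          (xs T t) / e) := by
    intro t ht
    have htT : t < T := Finset.mem_range.mp ht
    have h1 : s ≤ postVar k (e • (1 : Matrix (Fin t) (Fin t) ℝ)) (preT (xs T) t) x :=
      postVar_prefix_mono hK (xs T) he0 htT.le x
    have ha := postVar_nonneg hK (preT (xs T) t) he0 x
    have hb := postVar_nonneg hK (preT (xs T) t) he0 (xs T t)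
    have hstd := hMVR T hT0 t htT x hx
    simp only [postStd] at hstd
    have h2 : postVar k (e • (1 : Matrix (Fin t) (Fin t) ℝ)) (preT (xs T) t) x
        ≤ postVar k (e • (1 : Matrix (Fin t) (Fin t) ℝ)) (preT (xs T) t) (xs T t) := by
      have hsq := Real.sqrt_le_sqrt (le_refl (postVar k (e • (1 : Matrix (Fin t) (Fin t) ℝ))
        (preT (xs T) t) x))
      nlinarith [Real.sq_sqrt ha, Real.sq_sqrt hb, Real.sqrt_nonneg
        (postVar k (e • (1 : Matrix (Fin t) (Fin t) ℝ)) (preT (xs T) t) x),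
        Real.sqrt_nonneg
        (postVar k (e • (1 : Matrix (Fin t) (Fin t) ℝ)) (preT (xs T) t) (xs T t)), hstd]
    have hlt : (0:ℝ) < 1 + s / e := by
      have : 0 ≤ s / e := by positivity
      linarith
    apply Real.log_le_log hlt
    have : s / e ≤ postVar k (e • (1 : Matrix (Fin t) (Fin t) ℝ)) (preT (xs T) t)
        (xs T t) / e := by
      exact (div_le_div_iff_of_pos_right he0).mpr (le_trans h1 h2)
    linarith
  have hTlog : (T : ℝ) * Real.log (1 + s / e) ≤ 2 * γ := by
    calc (T : ℝ) * Real.log (1 + s / e)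
        = ∑ _t ∈ Finset.range T, Real.log (1 + s / e) := by
          rw [Finset.sum_const, Finset.card_range, nsmul_eq_mul]
    _ ≤ ∑ t ∈ Finset.range T, Real.log (1 + postVar k
          (e • (1 : Matrix (Fin t) (Fin t) ℝ)) (preT (xs T) t) (xs T t) / e) :=
        Finset.sum_le_sum hterm
    _ = 2 * infoGain k (e • (1 : Matrix (Fin T) (Fin T) ℝ)) (preT (xs T) T) := hsum.symm
    _ ≤ 2 * γ := by linarith
  have h2γT : 2 * γ ≤ (T : ℝ) := hTb T hT e he0 (hlam2 T hT0)
  set y := 2 * γ / (T : ℝ) with hy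
  have hy0 : 0 ≤ y := by positivity
  have hy1 : y ≤ 1 := by
    rw [hy, div_le_one hT0']; exact h2γT
  have hlogy : Real.log (1 + s / e) ≤ y := by
    rw [hy, le_div_iff₀ hT0']
    linarith [hTlog]
  have hse : s / e ≤ 2 * y := by
    have h1 : 1 + s / e ≤ Real.exp y := by
      calc 1 + s / e = Real.exp (Real.log (1 + s / e)) := by
            rw [Real.exp_log (by positivity)]
      _ ≤ Real.exp y := Real.exp_le_exp.mpr hlogy
    have h2 := exp_le_one_add_two_mul hy0 hy1
    linarith
  have hsle : s ≤ 4 * e * γ / T := by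
    have : s ≤ 2 * y * e := by
      calc s = (s / e) * e := by field_simp
      _ ≤ 2 * y * e := mul_le_mul_of_nonneg_right hse he0.le
    calc s ≤ 2 * y * e := this
    _ = 4 * e * γ / T := by rw [hy]; field_simp; ring
  -- final algebra
  have hRHS : ((4 : ℝ) / T * Real.sqrt (e * T * γ)) ^ 2 = 16 * e * γ / T := by
    rw [mul_pow, Real.sq_sqrt (by positivity)]
    field_simp
    ring
  have hRHS0 : 0 ≤ (4 : ℝ) / T * Real.sqrt (e * T * γ) := by positivity
  have hfin : Real.sqrt s ≤ (4 : ℝ) / T * Real.sqrt (e * T * γ) := by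
    rw [show (4 : ℝ) / T * Real.sqrt (e * T * γ)
        = Real.sqrt (((4 : ℝ) / T * Real.sqrt (e * T * γ)) ^ 2) from
      (Real.sqrt_sq hRHS0).symm]
    apply Real.sqrt_le_sqrt
    rw [hRHS]
    have : (4 : ℝ) * e * γ / T ≤ 16 * e * γ / T := by
      exact (div_le_div_iff_of_pos_right hT0').mpr (by nlinarith [he0.le, hγ0])
    linarith
  exact hfin
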